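/- Let J be an Egorov ideal on ω and (I_n)_{n∈ω} be a sequence of analytic ideals on ω such that {n ∈ ω : I_n is not Egorov} ∈ J. Then the ideal ∑^J_{n∈ω} I_n is Egorov. -/

import Mathlib

open MeasureTheory Set

/-- An ideal on a (countable) set `X`. -/
def IsIdeal {X : Type} (I : Set (Set X)) : Prop :=
  (∀ A B : Set X, A ∈ I → B ∈ I → A ∪ B ∈ I) ∧
  (∀ A B : Set X, A ⊆ B → B ∈ I → A ∈ I) ∧
  (∀ A : Set X, A.Finite → A ∈ I) ∧
  (Set.univ : Set X) ∉ I

/-- `I`-pointwise convergence on `[0,1]` of a family of functions. -/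
def IConvPtwise {X : Type} (I : Set (Set X)) (f : X → ℝ → ℝ) (g : ℝ → ℝ) : Prop :=
  ∀ t ∈ Icc (0:ℝ) 1, ∀ ε : ℝ, 0 < ε → {a : X | ε ≤ |f a t - g t|} ∈ I

/-- `I`-uniform convergence on `M` of a family of functions. -/
def IConvUnif {X : Type} (I : Set (Set X)) (f : X → ℝ → ℝ) (g : ℝ → ℝ) (M : Set ℝ) : Prop :=
  ∀ ε : ℝ, 0 < ε → {a : X | ∃ t ∈ M, ε ≤ |f a t - g t|} ∈ I

/-- `I` is an Egorov ideal. -/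
def IsEgorov {X : Type} (I : Set (Set X)) : Prop :=
  ∀ (f : X → ℝ → ℝ) (g : ℝ → ℝ),
    (∀ a : X, AEMeasurable (f a) (volume.restrict (Icc (0:ℝ) 1))) →
    AEMeasurable g (volume.restrict (Icc (0:ℝ) 1)) →
    IConvPtwise I f g →
    ∀ η : ℝ, 0 < η →
      ∃ M : Set ℝ, M ⊆ Icc (0:ℝ) 1 ∧ NullMeasurableSet M volume ∧
        volume (Icc (0:ℝ) 1 \ M) < ENNReal.ofReal η ∧
        IConvUnif I f g M

def IsSubmeasure (φ : Set ℕ → ENNReal) : Prop :=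
  φ ∅ = 0 ∧ (∀ n : ℕ, φ {n} < ⊤) ∧
  ∀ A B : Set ℕ, φ A ≤ φ (A ∪ B) ∧ φ (A ∪ B) ≤ φ A + φ B

def IsLscSubmeasure (φ : Set ℕ → ENNReal) : Prop :=
  ∀ A : Set ℕ, φ A = ⨆ n : ℕ, φ (A ∩ Iio n)

def IsNonpathological (φ : Set ℕ → ENNReal) : Prop :=
  ∀ A : Set ℕ, φ A = ⨆ (μ : Measure ℕ) (_ : ∀ B : Set ℕ, μ B ≤ φ B), μ A

/-- `I` is a non-pathological Σ⁰₂ ideal: `I = Fin(φ)` for some non-pathological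
lsc submeasure `φ` with `φ(ω) = ∞`. -/
def IsNonpathSigma2 (I : Set (Set ℕ)) : Prop :=
  ∃ φ : Set ℕ → ENNReal, IsSubmeasure φ ∧ IsLscSubmeasure φ ∧ IsNonpathological φ ∧
    φ Set.univ = ⊤ ∧ I = {A : Set ℕ | φ A < ⊤}

def IdealCountablyGenerated {X : Type} (I : Set (Set X)) : Prop :=
  ∃ B : Set (Set X), B.Countable ∧ B ⊆ I ∧
    ∀ A ∈ I, ∃ F : Set (Set X), F ⊆ B ∧ F.Finite ∧ A ⊆ ⋃₀ F

def IdealIso {X Y : Type} (I : Set (Set X)) (J : Set (Set Y)) : Prop :=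
  ∃ f : Y → X, Function.Bijective f ∧ ∀ A : Set X, (A ∈ I ↔ f ⁻¹' A ∈ J)

def RKle {X Y : Type} (I : Set (Set X)) (J : Set (Set Y)) : Prop :=
  ∃ f : Y → X, ∀ A : Set X, (A ∈ I ↔ f ⁻¹' A ∈ J)

def RBle {X Y : Type} (I : Set (Set X)) (J : Set (Set Y)) : Prop :=
  ∃ f : Y → X, (∀ x : X, (f ⁻¹' {x}).Finite) ∧ ∀ A : Set X, (A ∈ I ↔ f ⁻¹' A ∈ J)

/-- The restriction `I↾A` of an ideal, as an ideal on the subtype `↥A`. -/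
def restrictIdeal {X : Type} (I : Set (Set X)) (A : Set X) : Set (Set ↥A) :=
  {S : Set ↥A | (Subtype.val '' S) ∈ I}

def IsTall {X : Type} (I : Set (Set X)) : Prop :=
  ∀ A : Set X, A.Infinite → ∃ B ∈ I, B.Infinite ∧ B ⊆ A

/-- The `J`-sum `∑^J_{n∈ω} I_n` on `ω²`: sets whose `I_n`-positive sections form a `J`-set. -/
def idealSumOver (J : Set (Set ℕ)) (I : ℕ → Set (Set ℕ)) : Set (Set (ℕ × ℕ)) :=
  {M : Set (ℕ × ℕ) | {n : ℕ | {k : ℕ | (n, k) ∈ M} ∉ I n} ∈ J}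

/-- The identification of `P(X)` with the Cantor space `2^X`. -/
def idealChar {X : Type} (I : Set (Set X)) : Set (X → Bool) :=
  {x : X → Bool | {a : X | x a = true} ∈ I}

/-- An ideal on `ω` is analytic if it is an analytic subset of the Cantor space `2^ω`. -/
def IsAnalyticIdeal (I : Set (Set ℕ)) : Prop := MeasureTheory.AnalyticSet (idealChar I)


section EgorovAux

open Filter Topology

lemma aux_geom_sum_le (ε : ENNReal) (m : ℕ) :
    ∑ j ∈ Finset.range m, ε / 2 ^ (j + 1) ≤ ε := by
  have h1 : ∑ j ∈ Finset.range m, ε / 2 ^ (j + 1)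
      = ε * ∑ j ∈ Finset.range m, (2 : ENNReal)⁻¹ ^ (j+1) := by
    rw [Finset.mul_sum]
    refine Finset.sum_congr rfl fun j _ => ?_
    rw [div_eq_mul_inv, ENNReal.inv_pow]
  rw [h1]
  have h2 : ∑ j ∈ Finset.range m, (2 : ENNReal)⁻¹ ^ (j+1) ≤ 1 := by
    have hle : ∑ j ∈ Finset.range m, (2 : ENNReal)⁻¹ ^ (j+1)
        ≤ ∑' j : ℕ, (2 : ENNReal)⁻¹ ^ (j+1) :=
      ENNReal.sum_le_tsum _
    have : ∑' j : ℕ, (2 : ENNReal)⁻¹ ^ (j+1) = (2:ENNReal)⁻¹ * ∑' j : ℕ, (2 : ENNReal)⁻¹ ^ j := by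
      rw [← ENNReal.tsum_mul_left]
      exact tsum_congr fun j => by rw [pow_succ, mul_comm]
    rw [this, ENNReal.tsum_geometric] at hle
    have h12 : (1 : ENNReal) - 2⁻¹ = 2⁻¹ := ENNReal.one_sub_inv_two
    rw [h12, inv_inv] at hle
    calc ∑ j ∈ Finset.range m, (2 : ENNReal)⁻¹ ^ (j+1) ≤ 2⁻¹ * 2 := hle
    _ = 1 := by simp [ENNReal.inv_mul_cancel]
  calc ε * ∑ j ∈ Finset.range m, (2 : ENNReal)⁻¹ ^ (j+1) ≤ ε * 1 := by
        exact mul_le_mul_right h2 ε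
  _ = ε := mul_one ε

/-- Key capacitability step: inner approximation of a continuous image of Baire space
by compact sets, w.r.t. a finite measure. -/
lemma aux_cap {μ : Measure ℝ} [IsFiniteMeasure μ] {f : (ℕ → ℕ) → ℝ}
    (hf : Continuous f) {ε : ENNReal} (hε : ε ≠ 0) :
    ∃ K, IsCompact K ∧ K ⊆ range f ∧ μ (range f) ≤ μ K + ε := by
  classical
  set D : (ℕ → ℕ) → ℕ → Set (ℕ → ℕ) := fun u m => {x | ∀ i < m, x i ≤ u i} with hD
  have hδ0 : ∀ m : ℕ, ε / 2 ^ (m + 1) ≠ 0 := by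
    intro m
    simp only [ne_eq, ENNReal.div_eq_zero_iff, hε, false_or]
    exact ENNReal.pow_ne_top (by norm_num)
  have step : ∀ (u : ℕ → ℕ) (m : ℕ), ∃ b : ℕ,
      μ (f '' D u m) ≤ μ (f '' (D u m ∩ {x | x m ≤ b})) + ε / 2 ^ (m+1) := by
    intro u m
    have hmono : Monotone (fun b : ℕ => f '' (D u m ∩ {x | x m ≤ b})) := by
      intro b b' hbb'
      exact image_mono (inter_subset_inter_right _ (fun x hx => le_trans hx hbb'))
    have hun : ⋃ b : ℕ, f '' (D u m ∩ {x | x m ≤ b}) = f '' D u m := by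
      rw [← image_iUnion, ← inter_iUnion]
      congr 1
      have : ⋃ b : ℕ, {x : ℕ → ℕ | x m ≤ b} = univ := by
        ext x; simp only [mem_iUnion, mem_setOf_eq, mem_univ, iff_true]
        exact ⟨x m, le_refl _⟩
      rw [this, inter_univ]
    have hsup : μ (f '' D u m) = ⨆ b : ℕ, μ (f '' (D u m ∩ {x | x m ≤ b})) := by
      rw [← hun, hmono.measure_iUnion]
    rcases eq_or_ne (μ (f '' D u m)) 0 with h0 | h0
    · exact ⟨0, by rw [h0]; exact zero_le⟩
    · have hlt : μ (f '' D u m) - ε / 2^(m+1) < ⨆ b : ℕ, μ (f '' (D u m ∩ {x | x m ≤ b})) := by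
        rw [← hsup]
        exact ENNReal.sub_lt_self (measure_ne_top μ _) h0 (hδ0 m)
      rcases lt_iSup_iff.mp hlt with ⟨b, hb⟩
      exact ⟨b, tsub_le_iff_right.mp hb.le⟩
  choose bsel hbsel using step
  set p : ℕ → (ℕ → ℕ) := fun m => Nat.rec (fun _ => 0)
    (fun m pm => Function.update pm m (bsel pm m)) m with hp
  set σ : ℕ → ℕ := fun i => p (i + 1) i with hσ
  have hp_stable : ∀ m i, i < m → p m i = σ i := by
    intro m
    induction m with
    | zero => intro i hi; omega
    | succ m ih =>
      intro i hi
      rcases Nat.lt_succ_iff_lt_or_eq.mp hi with h | h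
      · have : p (m+1) i = p m i := by
          show Function.update (p m) m (bsel (p m) m) i = p m i
          exact Function.update_of_ne (by omega) _ _
        rw [this, ih i h]
      · subst h; rfl
  have hDσ : ∀ m, D σ m = D (p m) m := by
    intro m
    ext x
    simp only [hD, mem_setOf_eq]
    exact ⟨fun h i hi => (hp_stable m i hi) ▸ h i hi,
           fun h i hi => (hp_stable m i hi).symm ▸ h i hi⟩
  have hDsucc : ∀ m, D σ (m+1) = D (p m) m ∩ {x | x m ≤ bsel (p m) m} := by
    intro m
    ext x
    simp only [hD, mem_setOf_eq, mem_inter_iff]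
    constructor
    · intro h
      refine ⟨fun i hi => (hp_stable m i hi) ▸ h i (by omega), ?_⟩
      have := h m (by omega)
      have hσm : σ m = bsel (p m) m := by
        show p (m+1) m = bsel (p m) m
        show Function.update (p m) m (bsel (p m) m) m = bsel (p m) m
        exact Function.update_self _ _ _
      rwa [hσm] at this
    · rintro ⟨h1, h2⟩ i hi
      rcases Nat.lt_succ_iff_lt_or_eq.mp hi with h | h
      · rw [← hp_stable m i h]; exact h1 i h
      · subst h
        have hσm : σ i = bsel (p i) i := Function.update_self _ _ _
        rwa [hσm]
  have Inv : ∀ m, μ (range f) ≤ μ (f '' D σ m) + ∑ j ∈ Finset.range m, ε / 2 ^ (j+1) := by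
    intro m
    induction m with
    | zero =>
      have : D σ 0 = univ := by ext x; simp [hD]
      rw [this, image_univ]
      simp
    | succ m ih =>
      calc μ (range f) ≤ μ (f '' D σ m) + ∑ j ∈ Finset.range m, ε / 2 ^ (j+1) := ih
      _ ≤ (μ (f '' (D (p m) m ∩ {x | x m ≤ bsel (p m) m})) + ε / 2^(m+1))
            + ∑ j ∈ Finset.range m, ε / 2 ^ (j+1) := by
          rw [hDσ m]
          exact add_le_add_left (hbsel (p m) m) _
      _ = μ (f '' D σ (m+1)) + ∑ j ∈ Finset.range (m+1), ε / 2 ^ (j+1) := by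
          rw [hDsucc m, Finset.sum_range_succ]
          ring
  -- the compact set
  set K0 : Set (ℕ → ℕ) := univ.pi (fun i => Iic (σ i)) with hK0
  have hK0c : IsCompact K0 := isCompact_univ_pi (fun i => (finite_Iic (σ i)).isCompact)
  refine ⟨f '' K0, hK0c.image hf, image_subset_range f K0, ?_⟩
  -- the intersection of closures is inside f '' K0
  have hclos : (⋂ m, closure (f '' D σ m)) ⊆ f '' K0 := by
    intro y hy
    have hex : ∀ m : ℕ, ∃ x, x ∈ D σ m ∧ dist y (f x) < 1 / (m+1) := by
      intro m
      have h1 := mem_iInter.1 hy m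
      rw [Metric.mem_closure_iff] at h1
      rcases h1 (1/(m+1)) (by positivity) with ⟨z, hz, hdz⟩
      rcases hz with ⟨x, hx, rfl⟩
      exact ⟨x, hx, hdz⟩
    choose x hxD hxd using hex
    set z : ℕ → ℕ → ℕ := fun m i => min (x m i) (σ i) with hz
    have hzK : ∀ m, z m ∈ K0 := by
      intro m
      rw [hK0, mem_univ_pi]
      intro i
      simp only [hz, mem_Iic]
      exact min_le_right _ _
    obtain ⟨a, haK, φ, hφ, hza⟩ := hK0c.tendsto_subseq hzK
    have hxa : Tendsto (fun j => x (φ j)) atTop (𝓝 a) := by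
      rw [tendsto_pi_nhds]
      intro i
      have h1 : Tendsto (fun j => z (φ j) i) atTop (𝓝 (a i)) := by
        have := hza
        rw [tendsto_pi_nhds] at this
        exact this i
      apply h1.congr'
      filter_upwards [eventually_ge_atTop (i+1)] with j hj
      have hij : i < φ j := lt_of_lt_of_le (by omega) hφ.le_apply
      exact min_eq_left (hxD (φ j) i hij)
    have h1 : Tendsto (fun j => f (x (φ j))) atTop (𝓝 (f a)) :=
      (hf.tendsto a).comp hxa
    have h2 : Tendsto (fun j => f (x (φ j))) atTop (𝓝 y) := by
      have h3 : Tendsto (fun m => f (x m)) atTop (𝓝 y) := by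
        rw [tendsto_iff_dist_tendsto_zero]
        refine squeeze_zero (fun m => dist_nonneg) (fun m => ?_) tendsto_one_div_add_atTop_nhds_zero_nat
        rw [dist_comm]
        exact (hxd m).le
      exact h3.comp hφ.tendsto_atTop
    exact ⟨a, haK, tendsto_nhds_unique h1 h2⟩
  -- finish
  have hanti : Antitone (fun m => closure (f '' D σ m)) := by
    intro m m' hmm'
    apply closure_mono
    apply image_mono
    intro x hx i hi
    exact hx i (lt_of_lt_of_le hi hmm')
  have hiInf : μ (⋂ m, closure (f '' D σ m)) = ⨅ m, μ (closure (f '' D σ m)) :=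
    hanti.measure_iInter (fun m => (isClosed_closure.measurableSet).nullMeasurableSet)
      ⟨0, measure_ne_top μ _⟩
  have hle2 : μ (range f) ≤ μ (⋂ m, closure (f '' D σ m)) + ε := by
    rw [hiInf, ENNReal.iInf_add]
    refine le_iInf fun m => ?_
    calc μ (range f) ≤ μ (f '' D σ m) + ∑ j ∈ Finset.range m, ε / 2 ^ (j+1) := Inv m
    _ ≤ μ (closure (f '' D σ m)) + ε :=
        add_le_add (measure_mono subset_closure) (aux_geom_sum_le ε m)
  exact hle2.trans (add_le_add_left (measure_mono hclos) ε)

/-- Lusin's theorem: analytic subsets of `ℝ` are universally (here: null-) measurable. -/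
lemma analyticSet_nullMeasurableSet {μ : Measure ℝ} [IsFiniteMeasure μ] {s : Set ℝ}
    (hs : MeasureTheory.AnalyticSet s) : NullMeasurableSet s μ := by
  rw [MeasureTheory.AnalyticSet_def] at hs
  rcases hs with rfl | ⟨f, hf, rfl⟩
  · exact (MeasurableSet.empty).nullMeasurableSet
  choose K hKc hKs hKle using fun n : ℕ =>
    aux_cap (μ := μ) hf (ε := ((n : ENNReal) + 1)⁻¹) (by simp)
  set E := ⋃ n, K n with hE
  have hEm : MeasurableSet E := MeasurableSet.iUnion fun n => (hKc n).measurableSet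
  have hEs : E ⊆ range f := iUnion_subset hKs
  have h1 : ∀ n : ℕ, μ (range f) ≤ μ E + ((n : ENNReal) + 1)⁻¹ := fun n =>
    (hKle n).trans (add_le_add_left (measure_mono (subset_iUnion K n)) _)
  have h2 : μ (range f) ≤ μ E := by
    refine ENNReal.le_of_forall_pos_le_add fun δ hδ _ => ?_
    obtain ⟨n, hn⟩ := ENNReal.exists_inv_nat_lt (show (δ : ENNReal) ≠ 0 by
      simpa using hδ.ne')
    refine (h1 n).trans (add_le_add_right ?_ _)
    refine le_of_lt (lt_of_le_of_lt ?_ hn)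
    exact ENNReal.inv_le_inv.mpr (by simp)
  have hnull : μ (range f \ E) = 0 := by
    have hsub : range f \ E ⊆ toMeasurable μ (range f) \ E :=
      diff_subset_diff_left (subset_toMeasurable μ _)
    have hEsub : E ⊆ toMeasurable μ (range f) := hEs.trans (subset_toMeasurable μ _)
    have : μ (toMeasurable μ (range f) \ E) = μ (toMeasurable μ (range f)) - μ E :=
      measure_diff hEsub hEm.nullMeasurableSet (measure_ne_top μ _)
    rw [measure_toMeasurable] at this
    have hz : μ (toMeasurable μ (range f) \ E) = 0 := by
      rw [this]
      exact tsub_eq_zero_of_le h2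
    exact measure_mono_null hsub hz
  refine ⟨E, hEm, ?_⟩
  rw [ae_eq_set]
  exact ⟨hnull, by rw [diff_eq_empty.mpr hEs]; simp⟩

/-- Preimage of an analytic subset of Cantor space under a Borel map on `ℝ` is analytic. -/
lemma analyticSet_preimage_of_measurable {F : ℝ → (ℕ → Bool)} (hF : Measurable F)
    {A : Set (ℕ → Bool)} (hA : MeasureTheory.AnalyticSet A) :
    MeasureTheory.AnalyticSet (F ⁻¹' A) := by
  obtain ⟨t', ht'le, hcont, hpol⟩ := hF.exists_continuous
  have h1 : @MeasureTheory.AnalyticSet ℝ t' (F ⁻¹' A) :=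
    @MeasureTheory.AnalyticSet.preimage ℝ (ℕ → Bool) t' _ hpol _ A hA F hcont
  have h2 := @MeasureTheory.AnalyticSet.image_of_continuous ℝ t' ℝ
    (UniformSpace.toTopologicalSpace) (F ⁻¹' A) h1 id
    (@continuous_id_of_le ℝ t' UniformSpace.toTopologicalSpace ht'le)
  simpa using h2

lemma ideal_biUnion_mem {J : Set (Set ℕ)} (hJ : IsIdeal J) {m : ℕ} {S : ℕ → Set ℕ}
    (h : ∀ j, j < m → S j ∈ J) : (⋃ j, ⋃ (_ : j < m), S j) ∈ J := by
  induction m with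
  | zero => simpa using hJ.2.2.1 ∅ finite_empty
  | succ m ih =>
    rw [Set.biUnion_lt_succ]
    exact hJ.1 _ _ (ih fun j hj => h j (hj.trans (Nat.lt_succ_self m))) (h m (Nat.lt_succ_self m))

lemma aux_tsum_half : ∑' n : ℕ, ENNReal.ofReal ((1/2:ℝ)^(n+1)) = 1 := by
  have hx : ENNReal.ofReal (1/2 : ℝ) = 2⁻¹ := by
    rw [one_div, ENNReal.ofReal_inv_of_pos (by norm_num)]
    norm_num
  have h1 : ∀ n : ℕ, ENNReal.ofReal ((1/2:ℝ)^(n+1)) = 2⁻¹ * 2⁻¹ ^ n := by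
    intro n
    rw [ENNReal.ofReal_pow (by norm_num), hx, pow_succ, mul_comm]
  simp_rw [h1]
  rw [ENNReal.tsum_mul_left, ENNReal.tsum_geometric, ENNReal.one_sub_inv_two, inv_inv]
  simp [ENNReal.inv_mul_cancel]

lemma aux_tsum_bound (c : ℝ) (hc : 0 ≤ c) :
    ∑' n : ℕ, ENNReal.ofReal (c * (1/2:ℝ)^(n+1)) ≤ ENNReal.ofReal c := by
  have h1 : ∀ n : ℕ, ENNReal.ofReal (c * (1/2:ℝ)^(n+1))
      = ENNReal.ofReal c * ENNReal.ofReal ((1/2:ℝ)^(n+1)) := fun n => ENNReal.ofReal_mul hc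
  simp_rw [h1]
  rw [ENNReal.tsum_mul_left, aux_tsum_half, mul_one]

lemma aux_w_summable : Summable (fun j : ℕ => 2 * (1/2:ℝ)^j) :=
  (summable_geometric_of_lt_one (by norm_num) (by norm_num)).mul_left 2

lemma aux_rho_summable (c : ℕ → Prop) [DecidablePred c] :
    Summable (fun j => if c j then 0 else 2 * (1/2:ℝ)^j) := by
  refine Summable.of_nonneg_of_le (fun j => ?_) (fun j => ?_) aux_w_summable
  · split_ifs
    · exact le_refl 0
    · positivity
  · split_ifs
    · positivity
    · exact le_refl _

lemma aux_rho_nonneg (c : ℕ → Prop) [DecidablePred c] :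
    0 ≤ ∑' j, if c j then 0 else 2 * (1/2:ℝ)^j := by
  refine tsum_nonneg fun j => ?_
  split_ifs
  · exact le_refl 0
  · positivity

lemma aux_tsum_w_shift (m : ℕ) : ∑' j : ℕ, 2 * (1/2:ℝ)^(j+m) = 4 * (1/2:ℝ)^m := by
  have h1 : ∀ j : ℕ, 2 * (1/2:ℝ)^(j+m) = (2 * (1/2:ℝ)^m) * (1/2:ℝ)^j := by
    intro j; rw [pow_add]; ring
  simp_rw [h1]
  rw [tsum_mul_left, tsum_geometric_two]
  ring

set_option maxHeartbeats 1000000 in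
lemma aux_rho_small (c : ℕ → Prop) [DecidablePred c] (m : ℕ) (hm : ∀ j, j < m → c j) :
    ∑' j, (if c j then 0 else 2 * (1/2:ℝ)^j) ≤ 4 * (1/2:ℝ)^m := by
  have hsum := aux_rho_summable c
  rw [← Summable.sum_add_tsum_nat_add m hsum]
  have hzero : ∑ j ∈ Finset.range m, (if c j then 0 else 2 * (1/2:ℝ)^j) = 0 :=
    Finset.sum_eq_zero fun j hj => if_pos (hm j (Finset.mem_range.mp hj))
  rw [hzero, zero_add]
  calc ∑' j : ℕ, (if c (j + m) then 0 else 2 * (1/2:ℝ)^(j+m))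
      ≤ ∑' j : ℕ, 2 * (1/2:ℝ)^(j+m) := by
        refine Summable.tsum_le_tsum (fun j => ?_) ((summable_nat_add_iff m).mpr (aux_rho_summable c))
          ((summable_nat_add_iff m).mpr aux_w_summable)
        split_ifs
        · positivity
        · exact le_refl _
    _ = 4 * (1/2:ℝ)^m := aux_tsum_w_shift m

lemma aux_rho_ge (c : ℕ → Prop) [DecidablePred c] (m : ℕ) (hm : ¬ c m) :
    2 * (1/2:ℝ)^m ≤ ∑' j, if c j then 0 else 2 * (1/2:ℝ)^j := by
  have h1 : (if c m then 0 else 2 * (1/2:ℝ)^m) ≤ ∑' j, if c j then 0 else 2 * (1/2:ℝ)^j := by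
    refine Summable.le_tsum (aux_rho_summable c) m fun j _ => ?_
    split_ifs
    · exact le_refl 0
    · positivity
  rwa [if_neg hm] at h1


end EgorovAux

/-- If `J` is Egorov, every `I_n` is analytic and `{n : I_n is not Egorov} ∈ J`,
then `∑^J_{n∈ω} I_n` is Egorov. -/
theorem idealSumOver_egorov (J : Set (Set ℕ)) (I : ℕ → Set (Set ℕ))
    (hJ : IsIdeal J) (hI : ∀ n : ℕ, IsIdeal (I n))
    (hIa : ∀ n : ℕ, IsAnalyticIdeal (I n)) (hJE : IsEgorov J)
    (h : {n : ℕ | ¬ IsEgorov (I n)} ∈ J) : IsEgorov (idealSumOver J I) := by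
  classical
  intro f g hmf hmg hconv η hη
  set μI := (volume : Measure ℝ).restrict (Icc (0:ℝ) 1) with hμI
  -- measurable representatives
  set F : ℕ × ℕ → ℝ → ℝ := fun a => (hmf a).mk (f a) with hFdef
  have hFm : ∀ a, Measurable (F a) := fun a => (hmf a).measurable_mk
  have hFae : ∀ a : ℕ × ℕ, f a =ᵐ[μI] F a := fun a => (hmf a).ae_eq_mk
  set G : ℝ → ℝ := hmg.mk g with hGdef
  have hGm : Measurable G := hmg.measurable_mk
  have hGae : g =ᵐ[μI] G := hmg.ae_eq_mk
  -- the bad null set N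
  set N0 : Set ℝ := {t | g t ≠ G t} ∪ ⋃ a : ℕ × ℕ, {t | f a t ≠ F a t} with hN0
  have hN0null : μI N0 = 0 := by
    apply measure_union_null
    · have := hGae
      rw [Filter.EventuallyEq, ae_iff] at this
      exact this
    · refine measure_iUnion_null fun a => ?_
      have := hFae a
      rw [Filter.EventuallyEq, ae_iff] at this
      exact this
  set N : Set ℝ := toMeasurable μI N0 with hN
  have hNm : MeasurableSet N := measurableSet_toMeasurable _ _
  have hNnull : μI N = 0 := by rw [hN, measure_toMeasurable]; exact hN0null
  have hNt : ∀ t, t ∉ N → (∀ a, f a t = F a t) ∧ g t = G t := by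
    intro t ht
    have ht0 : t ∉ N0 := fun hh => ht (subset_toMeasurable _ _ hh)
    rw [hN0, mem_union] at ht0
    push_neg at ht0
    obtain ⟨h1, h2⟩ := ht0
    rw [mem_iUnion] at h2
    push_neg at h2
    refine ⟨fun a => ?_, by simpa using h1⟩
    have := h2 a
    simpa using this
  -- the T sets
  set T : ℕ → ℕ → Set ℝ :=
    fun j n => {t | {k | (1/2:ℝ)^j ≤ |F (n,k) t - G t|} ∈ I n} with hT
  have hTnull : ∀ j n, NullMeasurableSet (T j n) μI := by
    intro j n
    have hFjm : Measurable (fun t k => decide ((1/2:ℝ)^j ≤ |F (n,k) t - G t|) : ℝ → ℕ → Bool) := by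
      refine measurable_pi_lambda _ fun k => ?_
      refine measurable_to_countable' fun b => ?_
      have hms : MeasurableSet {t : ℝ | (1/2:ℝ)^j ≤ |F (n,k) t - G t|} :=
        measurableSet_le measurable_const ((hFm (n,k)).sub hGm).abs
      cases b
      · have heq : (fun t => decide ((1/2:ℝ)^j ≤ |F (n,k) t - G t|)) ⁻¹' {false}
            = {t : ℝ | (1/2:ℝ)^j ≤ |F (n,k) t - G t|}ᶜ := by
          ext t; simp
        rw [heq]
        exact hms.compl
      · have heq : (fun t => decide ((1/2:ℝ)^j ≤ |F (n,k) t - G t|)) ⁻¹' {true}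
            = {t : ℝ | (1/2:ℝ)^j ≤ |F (n,k) t - G t|} := by
          ext t; simp
        rw [heq]
        exact hms
    have hTeq : T j n
        = (fun t k => decide ((1/2:ℝ)^j ≤ |F (n,k) t - G t|)) ⁻¹' (idealChar (I n)) := by
      ext t
      simp [hT, idealChar, decide_eq_true_eq]
    rw [hTeq]
    exact analyticSet_nullMeasurableSet (analyticSet_preimage_of_measurable hFjm (hIa n))
  choose T' hT'm hT'ae using hTnull
  -- the rho functions
  set ρ : ℕ → ℝ → ℝ := fun n t => ∑' j, if t ∈ T j n then 0 else 2 * (1/2:ℝ)^j with hρ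
  have hρ0 : ∀ n t, 0 ≤ ρ n t := fun n t => aux_rho_nonneg _
  -- a.e.-measurability of ρ n
  have hρmeas : ∀ n, AEMeasurable (ρ n) μI := by
    intro n
    have hm' : Measurable (fun t => ∑' j, if t ∈ T' j n then 0 else 2 * (1/2:ℝ)^j) := by
      apply measurable_of_tendsto_metrizable
        (f := fun m t => ∑ j ∈ Finset.range m, if t ∈ T' j n then 0 else 2 * (1/2:ℝ)^j)
      · intro m
        refine Finset.measurable_sum _ fun j _ => Measurable.ite (hT'm j n) measurable_const
          measurable_const
      · rw [tendsto_pi_nhds]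
        intro t
        exact (aux_rho_summable (fun j => t ∈ T' j n)).hasSum.tendsto_sum_nat
    refine ⟨_, hm', ?_⟩
    have h1 : ∀ᵐ t ∂μI, ∀ j : ℕ, (t ∈ T j n ↔ t ∈ T' j n) :=
      ae_all_iff.mpr fun j => Filter.eventuallyEq_set.mp (hT'ae j n)
    filter_upwards [h1] with t ht
    exact tsum_congr fun j => if_congr (ht j) rfl rfl
  set ρh : ℕ → ℝ → ℝ := fun n => (Nᶜ).indicator (ρ n) with hρh
  have hρhmeas : ∀ n, AEMeasurable (ρh n) μI := fun n => (hρmeas n).indicator hNm.compl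
  -- membership facts at good points
  have hTJ : ∀ t, t ∈ Icc (0:ℝ) 1 → t ∉ N → ∀ j : ℕ, {n | t ∉ T j n} ∈ J := by
    intro t ht htN j
    have h1 := hconv t ht ((1/2:ℝ)^j) (by positivity)
    have heq : {n | t ∉ T j n}
        = {n | {k | (1/2:ℝ)^j ≤ |f (n,k) t - g t|} ∉ I n} := by
      ext n
      have hfa : ∀ k : ℕ, f (n,k) t = F (n,k) t := fun k => (hNt t htN).1 (n,k)
      simp only [hT, mem_setOf_eq]
      constructor
      · intro hx hc
        apply hx
        convert hc using 2
        ext k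
        rw [hfa k, (hNt t htN).2]
      · intro hx hc
        apply hx
        convert hc using 2
        ext k
        rw [hfa k, (hNt t htN).2]
    rw [heq]
    exact h1
  -- J-pointwise convergence of ρh to 0
  have hρhconv : IConvPtwise J ρh (fun _ => 0) := by
    intro t ht δ hδ
    show {n : ℕ | δ ≤ |ρh n t - 0|} ∈ J
    by_cases htN : t ∈ N
    · have heq : {n : ℕ | δ ≤ |ρh n t - 0|} = ∅ := by
        refine eq_empty_of_forall_notMem fun n hn => ?_
        have : ρh n t = 0 := indicator_of_notMem (by simpa using htN) _
        rw [mem_setOf_eq, this] at hn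
        simp at hn
        linarith
      rw [heq]
      exact hJ.2.2.1 ∅ finite_empty
    · obtain ⟨m, hm⟩ := exists_pow_lt_of_lt_one (show (0:ℝ) < δ/4 by linarith)
        (show (1/2:ℝ) < 1 by norm_num)
      refine hJ.2.1 _ _ ?_ (ideal_biUnion_mem hJ (m := m) (S := fun j => {n | t ∉ T j n}) (fun j _ => hTJ t ht htN j))
      intro n hn
      rw [mem_setOf_eq] at hn
      by_contra hcon
      simp only [mem_iUnion, mem_setOf_eq, not_exists] at hcon
      have hall : ∀ j, j < m → t ∈ T j n := by
        intro j hj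
        by_contra hc
        exact hcon j hj hc
      have hsmall : ρ n t ≤ 4 * (1/2:ℝ)^m := aux_rho_small _ m hall
      have hval : ρh n t = ρ n t := indicator_of_mem (by simpa using htN) _
      rw [hval, sub_zero, abs_of_nonneg (hρ0 n t)] at hn
      linarith
  -- apply Egorov for J
  obtain ⟨M0, hM0sub, hM0nm, hM0meas, hM0unif⟩ :=
    hJE ρh (fun _ => 0) hρhmeas aemeasurable_const hρhconv (η/2) (by linarith)
  -- the modified functions f'
  set f' : ℕ → ℕ → ℝ → ℝ :=
    fun n k => (Nᶜ).indicator (fun t => max (min |F (n,k) t - G t| 1 - ρ n t) 0) with hf'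
  have hf'meas : ∀ n k, AEMeasurable (f' n k) μI := by
    intro n k
    refine AEMeasurable.indicator ?_ hNm.compl
    refine AEMeasurable.max ?_ aemeasurable_const
    refine AEMeasurable.sub ?_ (hρmeas n)
    exact AEMeasurable.min ((hFm (n,k)).sub hGm).abs.aemeasurable aemeasurable_const
  have hf'conv : ∀ n, IConvPtwise (I n) (fun k => f' n k) (fun _ => 0) := by
    intro n t _ ε hε
    show {k : ℕ | ε ≤ |f' n k t - 0|} ∈ I n
    by_cases htN : t ∈ N
    · have heq : {k : ℕ | ε ≤ |f' n k t - 0|} = ∅ := by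
        refine eq_empty_of_forall_notMem fun k hk => ?_
        have : f' n k t = 0 := indicator_of_notMem (by simpa using htN) _
        rw [mem_setOf_eq, this] at hk
        simp at hk
        linarith
      rw [heq]
      exact (hI n).2.2.1 ∅ finite_empty
    · have hval : ∀ k, f' n k t = max (min |F (n,k) t - G t| 1 - ρ n t) 0 :=
        fun k => indicator_of_mem (by simpa using htN) _
      by_cases hall : ∀ j : ℕ, t ∈ T j n
      · obtain ⟨j, hj⟩ := exists_pow_lt_of_lt_one hε (show (1/2:ℝ) < 1 by norm_num)
        refine (hI n).2.1 _ _ ?_ (hall j)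
        intro k hk
        rw [mem_setOf_eq, hval k, sub_zero, abs_of_nonneg (le_max_right _ _)] at hk
        have h2 : ε ≤ min |F (n,k) t - G t| 1 - ρ n t := by
          rcases le_max_iff.mp hk with h2 | h2
          · exact h2
          · linarith
        have h3 : ε ≤ |F (n,k) t - G t| :=
          le_trans (le_trans h2 (by linarith [hρ0 n t])) (min_le_left _ _)
        exact le_trans hj.le h3
      · push_neg at hall
        have hfind : t ∉ T (Nat.find hall) n := Nat.find_spec hall
        have hρge : 2 * (1/2:ℝ)^(Nat.find hall) ≤ ρ n t := aux_rho_ge _ _ hfind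
        cases hm0 : Nat.find hall with
        | zero =>
          rw [hm0] at hρge
          norm_num at hρge
          have heq : {k : ℕ | ε ≤ |f' n k t - 0|} = ∅ := by
            refine eq_empty_of_forall_notMem fun k hk => ?_
            rw [mem_setOf_eq, hval k, sub_zero, abs_of_nonneg (le_max_right _ _)] at hk
            have hle1 : min |F (n,k) t - G t| 1 ≤ 1 := min_le_right _ _
            have hmax : max (min |F (n,k) t - G t| 1 - ρ n t) 0 = 0 := by
              rw [max_eq_right]
              linarith
            rw [hmax] at hk
            linarith
          rw [heq]
          exact (hI n).2.2.1 ∅ finite_empty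
        | succ m' =>
          rw [hm0] at hρge
          have hm' : t ∈ T m' n := by
            by_contra hc
            have hle := Nat.find_min' hall hc
            rw [hm0] at hle
            omega
          refine (hI n).2.1 _ _ ?_ hm'
          intro k hk
          rw [mem_setOf_eq, hval k, sub_zero, abs_of_nonneg (le_max_right _ _)] at hk
          have h2 : ε ≤ min |F (n,k) t - G t| 1 - ρ n t := by
            rcases le_max_iff.mp hk with h2 | h2
            · exact h2
            · linarith
          have h5 : min |F (n,k) t - G t| 1 ≤ |F (n,k) t - G t| := min_le_left _ _
          have h6 : 2 * (1/2:ℝ)^(m'+1) = (1/2:ℝ)^m' := by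
            rw [pow_succ]
            ring
          show (1/2:ℝ)^m' ≤ |F (n,k) t - G t|
          linarith [hρ0 n t]
  -- choose the sets M n
  have hMne : ∀ n : ℕ, ∃ Mn : Set ℝ, Mn ⊆ Icc (0:ℝ) 1 ∧ NullMeasurableSet Mn volume ∧
      volume (Icc (0:ℝ) 1 \ Mn) ≤ ENNReal.ofReal (η/2 * (1/2:ℝ)^(n+1)) ∧
      (¬ IsEgorov (I n) ∨ IConvUnif (I n) (fun k => f' n k) (fun _ => 0) Mn) := by
    intro n
    by_cases hE : IsEgorov (I n)
    · obtain ⟨Mn, h1, h2, h3, h4⟩ := hE (fun k => f' n k) (fun _ => 0) (hf'meas n)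
        aemeasurable_const (hf'conv n) (η/2 * (1/2:ℝ)^(n+1)) (by positivity)
      exact ⟨Mn, h1, h2, h3.le, Or.inr h4⟩
    · exact ⟨Icc 0 1, Subset.rfl, measurableSet_Icc.nullMeasurableSet, by simp, Or.inl hE⟩
  choose Mn hMn1 hMn2 hMn3 hMn4 using hMne
  -- the final set M
  set M : Set ℝ := (M0 ∩ ⋂ n, Mn n) \ N with hM
  have hMIcc : M ⊆ Icc (0:ℝ) 1 := fun t ht => hM0sub ht.1.1
  refine ⟨M, hMIcc, ?_, ?_, ?_⟩
  · exact (hM0nm.inter (NullMeasurableSet.iInter fun n => hMn2 n)).diff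
      hNm.nullMeasurableSet
  · -- measure estimate
    have hNIcc : volume (N ∩ Icc (0:ℝ) 1) = 0 := by
      have := hNnull
      rwa [hμI, Measure.restrict_apply hNm] at this
    have hsplit : Icc (0:ℝ) 1 \ M ⊆
        ((Icc (0:ℝ) 1 \ M0) ∪ ⋃ n, (Icc (0:ℝ) 1 \ Mn n)) ∪ (N ∩ Icc (0:ℝ) 1) := by
      intro t ht
      obtain ⟨htI, htM⟩ := ht
      by_cases htN : t ∈ N
      · exact Or.inr ⟨htN, htI⟩
      · left
        have h1 : t ∉ M0 ∩ ⋂ n, Mn n := fun hc => htM ⟨hc, htN⟩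
        rw [mem_inter_iff, not_and_or] at h1
        rcases h1 with h1 | h1
        · exact Or.inl ⟨htI, h1⟩
        · rw [mem_iInter] at h1
          push_neg at h1
          obtain ⟨n, hn⟩ := h1
          exact Or.inr (mem_iUnion.mpr ⟨n, htI, hn⟩)
    calc volume (Icc (0:ℝ) 1 \ M)
        ≤ volume (((Icc (0:ℝ) 1 \ M0) ∪ ⋃ n, (Icc (0:ℝ) 1 \ Mn n)) ∪ (N ∩ Icc (0:ℝ) 1)) :=
          measure_mono hsplit
      _ ≤ volume ((Icc (0:ℝ) 1 \ M0) ∪ ⋃ n, (Icc (0:ℝ) 1 \ Mn n)) + volume (N ∩ Icc (0:ℝ) 1) :=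
          measure_union_le _ _
      _ = volume ((Icc (0:ℝ) 1 \ M0) ∪ ⋃ n, (Icc (0:ℝ) 1 \ Mn n)) := by rw [hNIcc, add_zero]
      _ ≤ volume (Icc (0:ℝ) 1 \ M0) + volume (⋃ n, (Icc (0:ℝ) 1 \ Mn n)) := measure_union_le _ _
      _ ≤ volume (Icc (0:ℝ) 1 \ M0) + ∑' n, volume (Icc (0:ℝ) 1 \ Mn n) :=
          add_le_add_right (measure_iUnion_le _) _
      _ ≤ volume (Icc (0:ℝ) 1 \ M0) + ENNReal.ofReal (η/2) := by
          refine add_le_add_right (le_trans (ENNReal.tsum_le_tsum fun n => hMn3 n) ?_) _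
          exact aux_tsum_bound (η/2) (by linarith)
      _ < ENNReal.ofReal (η/2) + ENNReal.ofReal (η/2) :=
          ENNReal.add_lt_add_of_lt_of_le ENNReal.ofReal_ne_top hM0meas le_rfl
      _ = ENNReal.ofReal η := by
          rw [← ENNReal.ofReal_add (by linarith) (by linarith)]
          norm_num
  · -- uniform convergence
    intro ε hε
    set δ : ℝ := min ε 1 / 2 with hδdef
    have hδpos : 0 < δ := by
      rw [hδdef]
      have : (0:ℝ) < min ε 1 := lt_min hε (by norm_num)
      linarith
    have hD : {n | ∃ t ∈ M0, δ ≤ |ρh n t - 0|} ∈ J := hM0unif δ hδpos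
    show {n : ℕ | {k : ℕ | (n, k) ∈ {a : ℕ × ℕ | ∃ t ∈ M, ε ≤ |f a t - g t|}} ∉ I n} ∈ J
    refine hJ.2.1 _ ({n | ¬ IsEgorov (I n)} ∪ {n | ∃ t ∈ M0, δ ≤ |ρh n t - 0|}) ?_ (hJ.1 _ _ h hD)
    intro n hn
    rw [mem_setOf_eq] at hn
    by_contra hcon
    rw [mem_union] at hcon
    push_neg at hcon
    obtain ⟨hnA, hnD⟩ := hcon
    rw [mem_setOf_eq, not_not] at hnA
    rw [mem_setOf_eq] at hnD
    push_neg at hnD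
    have hunif : IConvUnif (I n) (fun k => f' n k) (fun _ => 0) (Mn n) := by
      rcases hMn4 n with hbad | hgood
      · exact absurd hnA hbad
      · exact hgood
    apply hn
    refine (hI n).2.1 _ {k | ∃ t ∈ Mn n, δ ≤ |f' n k t - 0|} ?_ (hunif δ hδpos)
    intro k hk
    rw [mem_setOf_eq] at hk
    obtain ⟨t, htM, hkt⟩ := hk
    have htM0 : t ∈ M0 := htM.1.1
    have htMn : t ∈ Mn n := mem_iInter.mp htM.1.2 n
    have htN : t ∉ N := htM.2
    have hd : |F (n,k) t - G t| = |f (n,k) t - g t| := by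
      rw [(hNt t htN).1 (n,k), (hNt t htN).2]
    have hρδ : ρ n t < δ := by
      have h1 := hnD t htM0
      have h2 : ρh n t = ρ n t := indicator_of_mem (by simpa using htN) _
      rw [h2, sub_zero, abs_of_nonneg (hρ0 n t)] at h1
      linarith
    have hval : f' n k t = max (min |F (n,k) t - G t| 1 - ρ n t) 0 :=
      indicator_of_mem (by simpa using htN) _
    have hdge : min ε 1 ≤ min |F (n,k) t - G t| 1 := by
      refine le_min (le_trans (min_le_left _ _) ?_) (min_le_right _ _)
      rw [hd]
      exact hkt
    have hge : δ ≤ f' n k t := by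
      rw [hval]
      refine le_max_of_le_left ?_
      rw [hδdef] at hρδ ⊢
      linarith [hdge]
    refine ⟨t, htMn, ?_⟩
    rw [sub_zero, abs_of_nonneg]
    · exact hge
    · rw [hval]; exact le_max_right _ _
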